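/- Let q > 1, Δt > 0, a mesh size h > 0, an integer M_x ≥ 1, nonnegative symmetric summable weights (w_j)_{j≠0}, and initial data u⁰ : ℤ → ℝ with u⁰_i = 0 for |i| > M_x. Then the fully discrete implicit scheme (FD) admits exactly one solution: there exists a unique sequence of functions (uⁿ)_{n∈ℕ}, uⁿ : ℤ → ℝ, with u⁰ as given, uⁿ_i = 0 for |i| > M_x and all n, and ((u^{n+1}_i)^{q−1} − (uⁿ_i)^{q−1})/Δt + [(−Δ)_h u^{n+1}]_i = 0 for all |i| ≤ M_x and all n ≥ 0. -/

import Mathlib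

open scoped BigOperators ENNReal

noncomputable def opow (x r : ℝ) : ℝ := |x| ^ (r - 1) * x

noncomputable def discLap (w u : ℤ → ℝ) (i : ℤ) : ℝ :=
  ∑' j : ℤ, if j = 0 then 0 else w j * (u i - u (i - j))

noncomputable def lqNorm (h q : ℝ) (u : ℤ → ℝ) : ℝ :=
  (∑' i : ℤ, h * |u i| ^ q) ^ (1 / q)

noncomputable def energyNorm (h : ℝ) (w u : ℤ → ℝ) : ℝ :=
  Real.sqrt ((1 / 2) * ∑' i : ℤ, ∑' j : ℤ, if j = 0 then 0 else h * w j * (u i - u (i - j)) ^ 2)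

/-- The fully discrete implicit scheme (FD). -/
def IsFD (q Δt : ℝ) (w : ℤ → ℝ) (Mx : ℤ) (u0 : ℤ → ℝ) (u : ℕ → ℤ → ℝ) : Prop :=
  u 0 = u0 ∧
  (∀ n : ℕ, ∀ i : ℤ, Mx < |i| → u n i = 0) ∧
  (∀ n : ℕ, ∀ i : ℤ, |i| ≤ Mx →
    (opow (u (n + 1) i) (q - 1) - opow (u n i) (q - 1)) / Δt + discLap w (u (n + 1)) i = 0)

/-- A solution of the semi-discrete scheme (SD) with initial data `u0`. -/
def IsSD (q : ℝ) (w : ℤ → ℝ) (Mx : ℤ) (u0 : ℤ → ℝ) (v : ℤ → ℝ → ℝ) : Prop :=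
  (∀ i : ℤ, ContinuousOn (v i) (Set.Ici 0)) ∧
  (∀ i : ℤ, Mx < |i| → ∀ t : ℝ, 0 ≤ t → v i t = 0) ∧
  (∀ i : ℤ, v i 0 = u0 i) ∧
  (∀ i : ℤ, |i| ≤ Mx → ∀ t : ℝ, 0 ≤ t →
    opow (v i t) (q - 1) = opow (u0 i) (q - 1) - ∫ s in (0:ℝ)..t, discLap w (fun k => v k s) i)

/-- `C` satisfies the discrete Poincaré–Sobolev inequality for exponent `q`. -/
def PSConst (h q C : ℝ) (w : ℤ → ℝ) (Mx : ℤ) : Prop :=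
  ∀ f : ℤ → ℝ, (∀ i : ℤ, Mx < |i| → f i = 0) → lqNorm h q f ≤ C * energyNorm h w f

lemma opow_of_nonneg' {x : ℝ} (hx : 0 ≤ x) {p : ℝ} (hp : 0 < p) : opow x p = x ^ p := by
  rcases eq_or_lt_of_le hx with h | h
  · simp [opow, ← h, Real.zero_rpow hp.ne']
  · rw [opow, abs_of_pos h, ← Real.rpow_add_one h.ne']
    ring_nf

lemma opow_neg'' (x p : ℝ) : opow (-x) p = - opow x p := by
  rw [opow, opow, abs_neg]; ring

lemma strictMono_opow {p : ℝ} (hp : 0 < p) : StrictMono (fun x => opow x p) := by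
  have key : ∀ x y : ℝ, 0 ≤ x → x < y → opow x p < opow y p := by
    intro x y hx hxy
    rw [opow_of_nonneg' hx hp, opow_of_nonneg' (hx.trans hxy.le) hp]
    exact Real.rpow_lt_rpow hx hxy hp
  intro x y hxy
  rcases le_or_gt 0 x with hx | hx
  · exact key x y hx hxy
  rcases lt_or_ge 0 y with hy | hy
  · have h1 := key 0 (-x) le_rfl (by linarith)
    rw [opow_neg''] at h1
    have h2 := key 0 y le_rfl hy
    have h0 : opow 0 p = 0 := by
      rw [opow, mul_zero]
    rw [h0] at h1 h2
    simp only
    linarith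
  · have := key (-y) (-x) (by linarith) (by linarith)
    rw [opow_neg'', opow_neg''] at this
    simp only
    linarith

lemma opow_sub_mul_nonneg {p : ℝ} (hp : 0 < p) (x y : ℝ) :
    0 ≤ (opow x p - opow y p) * (x - y) := by
  rcases lt_trichotomy x y with h | h | h
  · have := strictMono_opow hp h
    nlinarith
  · simp [h]
  · have := strictMono_opow hp h
    nlinarith

lemma opow_sub_mul_eq_zero {p : ℝ} (hp : 0 < p) {x y : ℝ}
    (h : (opow x p - opow y p) * (x - y) = 0) : x = y := by
  by_contra hne
  rcases lt_or_gt_of_ne hne with hlt | hgt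
  · have := strictMono_opow hp hlt
    nlinarith
  · have := strictMono_opow hp hgt
    nlinarith

lemma rho_bounds {q B : ℝ} (hq : 1 < q) (hB : 0 ≤ B) :
    ∃ R K : ℝ, 0 ≤ K ∧ 0 ≤ R ∧ (∀ s : ℝ, 0 ≤ s → -K ≤ s ^ q / q - B * s) ∧
      (∀ s : ℝ, R ≤ s → s ≤ s ^ q / q - B * s) := by
  have hq0 : (0:ℝ) < q := by linarith
  set a : ℝ := (q * B + q) ^ (q - 1)⁻¹ with ha
  have ha0 : 0 ≤ a := Real.rpow_nonneg (by nlinarith) _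
  have key : ∀ s : ℝ, 1 + a ≤ s → s ≤ s ^ q / q - B * s := by
    intro s hs
    have hs1 : (1:ℝ) ≤ s := by linarith
    have hspos : (0:ℝ) < s := by linarith
    have h1 : a ^ (q - 1) ≤ s ^ (q - 1) :=
      Real.rpow_le_rpow ha0 (by linarith) (by linarith)
    have h2 : a ^ (q - 1) = q * B + q := Real.rpow_inv_rpow (by nlinarith) (by linarith)
    have h3 : s ^ q = s ^ (q - 1) * s := by
      rw [← Real.rpow_add_one hspos.ne']; ring_nf
    rw [h2] at h1
    rw [h3, le_sub_iff_add_le, le_div_iff₀ hq0]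
    nlinarith
  refine ⟨1 + a, B * (1 + a), by positivity, by positivity, ?_, ?_⟩
  · intro s hs
    rcases le_or_gt s (1 + a) with h | h
    · have h0 : 0 ≤ s ^ q := Real.rpow_nonneg hs q
      have : 0 ≤ s ^ q / q := by positivity
      nlinarith
    · nlinarith [key s h.le]
  · exact key

open Finset in
lemma quad_bound {ι : Type} [Fintype ι] {S : ℝ} (c : ι → ι → ℝ)
    (hc0 : ∀ i k, 0 ≤ c i k) (hcsym : ∀ i k, c i k = c k i)
    (hcrow : ∀ i, ∑ k, c i k ≤ S) (z : ι → ℝ) :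
    ∑ i, ∑ k, c i k * z i * z k ≤ S * ∑ i, z i ^ 2 := by
  have step1 : ∑ i, ∑ k, c i k * z i * z k ≤
      ∑ i, ∑ k, (c i k * z i ^ 2 / 2 + c i k * z k ^ 2 / 2) := by
    refine Finset.sum_le_sum fun i _ => Finset.sum_le_sum fun k _ => ?_
    nlinarith [mul_nonneg (hc0 i k) (sq_nonneg (z i - z k))]
  have step2 : ∑ i, ∑ k, c i k * z i ^ 2 / 2 ≤ ∑ i, S * z i ^ 2 / 2 := by
    refine Finset.sum_le_sum fun i _ => ?_
    rw [show ∑ k, c i k * z i ^ 2 / 2 = (∑ k, c i k) * z i ^ 2 / 2 by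
      rw [← Finset.sum_div, ← Finset.sum_mul]]
    have := hcrow i
    nlinarith [sq_nonneg (z i)]
  have step3 : ∑ i, ∑ k, c i k * z k ^ 2 / 2 ≤ ∑ i, S * z i ^ 2 / 2 := by
    rw [Finset.sum_comm]
    refine Finset.sum_le_sum fun k _ => ?_
    rw [show ∑ i, c i k * z k ^ 2 / 2 = (∑ i, c k i) * z k ^ 2 / 2 by
      rw [← Finset.sum_div, ← Finset.sum_mul]
      congr 2
      exact Finset.sum_congr rfl fun i _ => by rw [hcsym]]
    have := hcrow k
    nlinarith [sq_nonneg (z k)]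
  calc ∑ i, ∑ k, c i k * z i * z k
      ≤ ∑ i, ∑ k, (c i k * z i ^ 2 / 2 + c i k * z k ^ 2 / 2) := step1
    _ = ∑ i, ∑ k, c i k * z i ^ 2 / 2 + ∑ i, ∑ k, c i k * z k ^ 2 / 2 := by
        rw [← Finset.sum_add_distrib]
        exact Finset.sum_congr rfl fun i _ => Finset.sum_add_distrib
    _ ≤ ∑ i, S * z i ^ 2 / 2 + ∑ i, S * z i ^ 2 / 2 := add_le_add step2 step3
    _ = S * ∑ i, z i ^ 2 := by
        rw [← Finset.sum_add_distrib, Finset.mul_sum]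
        exact Finset.sum_congr rfl fun i _ => by ring

open Finset in
lemma core_solve {ι : Type} [Fintype ι] [DecidableEq ι]
    {q Δt S : ℝ} (hq : 1 < q) (hΔt : 0 < Δt) (hS : 0 ≤ S)
    (c : ι → ι → ℝ) (hc0 : ∀ i k, 0 ≤ c i k) (hcsym : ∀ i k, c i k = c k i)
    (hcd : ∀ i, c i i = 0) (hcrow : ∀ i, ∑ k, c i k ≤ S) (b : ι → ℝ) :
    ∃! x : ι → ℝ, ∀ i, opow (x i) (q - 1) + Δt * (S * x i - ∑ k, c i k * x k) = b i := by
  have hq0 : (0:ℝ) < q := by linarith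
  have hp : (0:ℝ) < q - 1 := by linarith
  -- the functional
  set J : (ι → ℝ) → ℝ := fun x =>
    ∑ i, (|x i| ^ q / q - b i * x i) +
      Δt / 2 * (S * ∑ i, x i ^ 2 - ∑ i, ∑ k, c i k * x i * x k) with hJ
  have hJc : Continuous J := by
    apply Continuous.add
    · apply continuous_finset_sum
      intro i _
      exact (((continuous_abs.comp (continuous_apply i)).rpow_const
          (fun x => Or.inr hq0.le)).div_const q).sub
        (continuous_const.mul (continuous_apply i))
    · refine continuous_const.mul (Continuous.sub ?_ ?_)
      · exact continuous_const.mul (continuous_finset_sum _ fun i _ => (continuous_apply i).pow 2)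
      · exact continuous_finset_sum _ fun i _ => continuous_finset_sum _ fun k _ =>
          (continuous_const.mul (continuous_apply i)).mul (continuous_apply k)
  set B : ℝ := ∑ i, |b i| with hB
  have hB0 : 0 ≤ B := Finset.sum_nonneg fun i _ => abs_nonneg _
  have hBi : ∀ i, |b i| ≤ B := fun i =>
    Finset.single_le_sum (fun i _ => abs_nonneg (b i)) (mem_univ i)
  have hJlb : ∀ x : ι → ℝ, ∑ i, (|x i| ^ q / q - B * |x i|) ≤ J x := by
    intro x
    have hquad := quad_bound c hc0 hcsym hcrow x
    have h1 : ∑ i, (|x i| ^ q / q - B * |x i|) ≤ ∑ i, (|x i| ^ q / q - b i * x i) := by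
      refine Finset.sum_le_sum fun i _ => ?_
      have : b i * x i ≤ B * |x i| := by
        calc b i * x i ≤ |b i * x i| := le_abs_self _
          _ = |b i| * |x i| := abs_mul _ _
          _ ≤ B * |x i| := mul_le_mul_of_nonneg_right (hBi i) (abs_nonneg _)
      linarith
    have h2 : 0 ≤ Δt / 2 * (S * ∑ i, x i ^ 2 - ∑ i, ∑ k, c i k * x i * x k) := by
      have : 0 ≤ S * ∑ i, x i ^ 2 - ∑ i, ∑ k, c i k * x i * x k := by linarith
      positivity
    rw [hJ]
    dsimp only
    linarith
  obtain ⟨R, K, hK0, hR0, hlo, hhi⟩ := rho_bounds hq hB0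
  set N : ℝ := (Fintype.card ι : ℝ) with hN
  have hN0 : 0 ≤ N := by positivity
  set R2 : ℝ := max R (N * K + 1) with hR2
  have hR20 : 0 ≤ R2 := le_trans hR0 (le_max_left _ _)
  have hbig : ∀ x : ι → ℝ, ∀ i₀ : ι, R2 < |x i₀| → 1 ≤ J x := by
    intro x i₀ hi₀
    have key : ∀ i : ι, -K ≤ |x i| ^ q / q - B * |x i| :=
      fun i => hlo _ (abs_nonneg _)
    have key2 : N * K + 1 ≤ |x i₀| ^ q / q - B * |x i₀| := by
      have h1 : R ≤ |x i₀| := le_trans (le_max_left _ _) hi₀.le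
      have := hhi _ h1
      have h2 : N * K + 1 ≤ |x i₀| := le_trans (le_max_right _ _) hi₀.le
      linarith
    have hsplit : (fun i => |x i| ^ q / q - B * |x i|) i₀ +
        ∑ i ∈ univ.erase i₀, (|x i| ^ q / q - B * |x i|) =
        ∑ i, (|x i| ^ q / q - B * |x i|) :=
      Finset.add_sum_erase univ (fun i => |x i| ^ q / q - B * |x i|) (mem_univ i₀)
    have hrest : -(N * K) ≤ ∑ i ∈ univ.erase i₀, (|x i| ^ q / q - B * |x i|) := by
      have h3 : ∑ i ∈ univ.erase i₀, (-K) ≤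
          ∑ i ∈ univ.erase i₀, (|x i| ^ q / q - B * |x i|) :=
        Finset.sum_le_sum fun i _ => key i
      have h4 : ∑ i ∈ univ.erase i₀, (-K) = -(((univ.erase i₀).card : ℝ) * K) := by
        rw [Finset.sum_const, nsmul_eq_mul]; ring
      have h5 : ((univ.erase i₀).card : ℝ) ≤ N := by
        rw [hN]
        exact_mod_cast Nat.cast_le.mpr (Finset.card_erase_le.trans (le_of_eq rfl))
      nlinarith
    beta_reduce at hsplit
    calc (1:ℝ) = (N * K + 1) - N * K := by ring
      _ ≤ (|x i₀| ^ q / q - B * |x i₀|) +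
          ∑ i ∈ univ.erase i₀, (|x i| ^ q / q - B * |x i|) := by linarith [hrest, key2]
      _ = ∑ i, (|x i| ^ q / q - B * |x i|) := hsplit
      _ ≤ J x := hJlb x
  -- minimizer on a compact box
  set C : Set (ι → ℝ) := Set.pi Set.univ (fun _ => Set.Icc (-R2) R2) with hC
  have hCc : IsCompact C := isCompact_univ_pi fun _ => isCompact_Icc
  have hC0 : (0 : ι → ℝ) ∈ C := fun i _ => by
    simp only [Pi.zero_apply, Set.mem_Icc]
    constructor <;> linarith
  obtain ⟨x, hxC, hxmin⟩ := hCc.exists_isMinOn ⟨0, hC0⟩ hJc.continuousOn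
  have hJ0 : J 0 = 0 := by
    rw [hJ]
    simp [Real.zero_rpow hq0.ne']
  have hglobal : ∀ y, J x ≤ J y := by
    intro y
    by_cases hy : y ∈ C
    · exact hxmin hy
    · have h6 : ∃ i, R2 < |y i| := by
        by_contra hcon
        push_neg at hcon
        exact hy fun i _ => abs_le.mp (hcon i)
      obtain ⟨i₀, hi₀⟩ := h6
      have h7 := hbig y i₀ hi₀
      have h8 := hxmin hC0
      calc J x ≤ J 0 := h8
        _ ≤ J y := by rw [hJ0]; linarith
  -- first-order conditions
  have heq : ∀ i, opow (x i) (q - 1) + Δt * (S * x i - ∑ k, c i k * x k) = b i := by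
    intro i
    have hupd : Function.update x i (x i) = x := Function.update_eq_self i x
    have hmin : IsLocalMin (fun t => J (Function.update x i t)) (x i) := by
      refine Filter.Eventually.of_forall fun t => ?_
      simp only [hupd]
      exact hglobal _
    have h1 : HasDerivAt (fun t => ∑ i', (|Function.update x i t i'| ^ q / q
        - b i' * Function.update x i t i')) (opow (x i) (q - 1) - b i) (x i) := by
      have hsum := HasDerivAt.fun_sum (u := univ) (x := x i)
        (A := fun i' t => |Function.update x i t i'| ^ q / q - b i' * Function.update x i t i')
        (A' := fun i' => if i' = i then opow (x i) (q - 1) - b i else 0) ?_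
      · simpa [Finset.sum_ite_eq'] using hsum
      · intro i' _
        rcases eq_or_ne i' i with rfl | hne
        · simp only [Function.update_self, if_pos rfl]
          have hd2 := ((hasDerivAt_abs_rpow (x i') hq).div_const q).sub
            ((hasDerivAt_id (x i')).const_mul (b i'))
          convert hd2 using 1
          · rfl
          rw [if_pos trivial, opow, show q - 1 - 1 = q - 2 by ring]
          field_simp
        · simp only [Function.update_of_ne hne, if_neg hne]
          exact hasDerivAt_const _ _
    have h2 : HasDerivAt (fun t => ∑ i', (Function.update x i t i') ^ 2) (2 * x i) (x i) := by
      have hsum := HasDerivAt.fun_sum (u := univ) (x := x i)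
        (A := fun i' t => (Function.update x i t i') ^ 2)
        (A' := fun i' => if i' = i then 2 * x i else 0) ?_
      · simpa [Finset.sum_ite_eq'] using hsum
      · intro i' _
        rcases eq_or_ne i' i with rfl | hne
        · simp only [Function.update_self, if_pos rfl]
          simpa using hasDerivAt_pow 2 (x i')
        · simp only [Function.update_of_ne hne, if_neg hne]
          exact hasDerivAt_const _ _
    have hinner : ∀ i' : ι, i' ≠ i → HasDerivAt
        (fun t => ∑ k, c i' k * Function.update x i t i' * Function.update x i t k)
        (c i' i * x i') (x i) := by
      intro i' hne
      have hsum := HasDerivAt.fun_sum (u := univ) (x := x i)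
        (A := fun k t => c i' k * Function.update x i t i' * Function.update x i t k)
        (A' := fun k => if k = i then c i' i * x i' else 0) ?_
      · simpa [Finset.sum_ite_eq'] using hsum
      · intro k _
        rcases eq_or_ne k i with rfl | hnk
        · simp only [Function.update_of_ne hne, Function.update_self, if_pos rfl]
          simpa using (hasDerivAt_id (x k)).const_mul (c i' k * x i')
        · simp only [Function.update_of_ne hne, Function.update_of_ne hnk, if_neg hnk]
          exact hasDerivAt_const _ _
    have hinner2 : HasDerivAt
        (fun t => ∑ k, c i k * Function.update x i t i * Function.update x i t k)
        (∑ k, c i k * x k) (x i) := by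
      have hsum := HasDerivAt.fun_sum (u := univ) (x := x i)
        (A := fun k t => c i k * Function.update x i t i * Function.update x i t k)
        (A' := fun k => if k = i then 0 else c i k * x k) ?_
      · have hval : ∑ k, (if k = i then (0:ℝ) else c i k * x k) = ∑ k, c i k * x k := by
          refine Finset.sum_congr rfl fun k _ => ?_
          rcases eq_or_ne k i with rfl | hnk
          · simp [hcd]
          · simp [hnk]
        rwa [hval] at hsum
      · intro k _
        rcases eq_or_ne k i with rfl | hnk
        · simp only [Function.update_self, if_pos rfl, hcd, zero_mul]
          exact hasDerivAt_const _ _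
        · simp only [Function.update_self, Function.update_of_ne hnk, if_neg hnk]
          rw [show (fun t : ℝ => c i k * t * x k) = fun t => c i k * x k * t by
            funext t; ring]
          simpa using (hasDerivAt_id (x i)).const_mul (c i k * x k)
    have h3 : HasDerivAt (fun t => ∑ i', ∑ k, c i' k * Function.update x i t i' *
        Function.update x i t k) (2 * ∑ k, c i k * x k) (x i) := by
      have hsum := HasDerivAt.fun_sum (u := univ) (x := x i)
        (A := fun i' t => ∑ k, c i' k * Function.update x i t i' * Function.update x i t k)
        (A' := fun i' => if i' = i then ∑ k, c i k * x k else c i' i * x i') ?_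
      · have hval : ∑ i', (if i' = i then ∑ k, c i k * x k else c i' i * x i')
            = 2 * ∑ k, c i k * x k := by
          have e1 : ∀ i' : ι, (if i' = i then ∑ k, c i k * x k else c i' i * x i')
              = (if i' = i then ∑ k, c i k * x k else 0)
                + (if i' = i then 0 else c i' i * x i') := by
            intro i'; split <;> ring
          rw [Finset.sum_congr rfl fun i' _ => e1 i', Finset.sum_add_distrib,
            Finset.sum_ite_eq' univ i (fun _ => ∑ k, c i k * x k)]
          have e2 : ∑ i', (if i' = i then (0:ℝ) else c i' i * x i') = ∑ i', c i i' * x i' := by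
            refine Finset.sum_congr rfl fun i' _ => ?_
            rcases eq_or_ne i' i with rfl | hne
            · simp [hcd]
            · rw [if_neg hne, hcsym]
          rw [e2]
          simp [two_mul]
        rwa [hval] at hsum
      · intro i' _
        beta_reduce
        rcases eq_or_ne i' i with rfl | hne
        · rw [if_pos rfl]; exact hinner2
        · rw [if_neg hne]; exact hinner i' hne
    have hJd : HasDerivAt (fun t => J (Function.update x i t))
        ((opow (x i) (q - 1) - b i)
          + Δt / 2 * (S * (2 * x i) - 2 * ∑ k, c i k * x k)) (x i) := by
      have hcomb := h1.add (((h2.const_mul S).sub h3).const_mul (Δt / 2))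
      exact hcomb
    have hd0 : (opow (x i) (q - 1) - b i)
        + Δt / 2 * (S * (2 * x i) - 2 * ∑ k, c i k * x k) = 0 := by
      have hz := hmin.deriv_eq_zero
      rwa [hJd.deriv] at hz
    linear_combination hd0
  refine ⟨x, heq, ?_⟩
  intro y hy
  obtain ⟨d, hd⟩ : ∃ d : ι → ℝ, d = fun j => y j - x j := ⟨_, rfl⟩
  have hdi : ∀ j, d j = y j - x j := fun j => by rw [hd]
  have keyd : ∀ i, (opow (y i) (q - 1) - opow (x i) (q - 1))
      + Δt * (S * d i - ∑ k, c i k * d k) = 0 := by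
    intro i
    have hms : ∑ k, c i k * d k = ∑ k, c i k * y k - ∑ k, c i k * x k := by
      rw [← Finset.sum_sub_distrib]
      exact Finset.sum_congr rfl fun k _ => by rw [hdi]; ring
    have h1 := hy i
    have h2 := heq i
    linear_combination h1 - h2 + Δt * S * hdi i - Δt * hms
  have h5 : ∀ i, (opow (y i) (q - 1) - opow (x i) (q - 1)) * d i
      + Δt * (S * d i ^ 2 - ∑ k, c i k * d i * d k) = 0 := by
    intro i
    have hms : d i * ∑ k, c i k * d k = ∑ k, c i k * d i * d k := by
      rw [Finset.mul_sum]
      exact Finset.sum_congr rfl fun k _ => by ring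
    linear_combination d i * keyd i + Δt * hms
  have h6 : ∑ i, ((opow (y i) (q - 1) - opow (x i) (q - 1)) * d i)
      + Δt * (S * ∑ i, d i ^ 2 - ∑ i, ∑ k, c i k * d i * d k) = 0 := by
    have hz := Finset.sum_eq_zero (fun i (_ : i ∈ univ) => h5 i)
    rw [Finset.sum_add_distrib, ← Finset.mul_sum, Finset.sum_sub_distrib,
      ← Finset.mul_sum] at hz
    exact hz
  have hQ := quad_bound c hc0 hcsym hcrow d
  have h7 : ∀ i ∈ univ, 0 ≤ (opow (y i) (q - 1) - opow (x i) (q - 1)) * d i := by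
    intro i _
    rw [hdi]
    exact opow_sub_mul_nonneg hp (y i) (x i)
  have h8 : ∑ i, ((opow (y i) (q - 1) - opow (x i) (q - 1)) * d i) = 0 := by
    have hge := Finset.sum_nonneg h7
    nlinarith [mul_nonneg hΔt.le (sub_nonneg.mpr hQ)]
  funext j
  have h9 := (Finset.sum_eq_zero_iff_of_nonneg h7).mp h8 j (mem_univ j)
  have h10 : (opow (y j) (q - 1) - opow (x j) (q - 1)) * (y j - x j) = 0 := by
    rw [← hdi j]
    exact h9
  exact opow_sub_mul_eq_zero hp h10

section Bridge

variable {w : ℤ → ℝ} {Mx : ℤ}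

lemma summable_w' (hw0 : ∀ j : ℤ, 0 ≤ w j) (hwsum : Summable w) :
    Summable (fun j : ℤ => if j = 0 then (0:ℝ) else w j) :=
  Summable.of_nonneg_of_le (fun j => by split; exacts [le_rfl, hw0 j])
    (fun j => by split; exacts [hw0 j, le_rfl]) hwsum

lemma row_bound (hw0 : ∀ j : ℤ, 0 ≤ w j) (hwsum : Summable w) (i : ℤ) :
    ∑ k ∈ Finset.Icc (-Mx) Mx, (if k = i then (0:ℝ) else w (i - k)) ≤
      ∑' j : ℤ, if j = 0 then (0:ℝ) else w j := by
  set w' : ℤ → ℝ := fun j => if j = 0 then (0:ℝ) else w j with hw'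
  have hsw' := summable_w' hw0 hwsum
  have h1 : ∀ k : ℤ, (if k = i then (0:ℝ) else w (i - k)) = w' (i - k) := by
    intro k
    rcases eq_or_ne k i with rfl | h
    · simp [hw']
    · rw [if_neg h, hw']
      beta_reduce
      rw [if_neg (sub_ne_zero.mpr (Ne.symm h))]
  have h2 : ∑ k ∈ Finset.Icc (-Mx) Mx, (if k = i then (0:ℝ) else w (i - k)) =
      ∑ j ∈ (Finset.Icc (-Mx) Mx).image (fun k => i - k), w' j := by
    rw [Finset.sum_image (fun x _ y _ h => by omega)]
    exact Finset.sum_congr rfl fun k _ => h1 k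
  rw [h2]
  refine Summable.sum_le_tsum _ (fun j _ => ?_) hsw'
  rw [hw']
  beta_reduce
  split
  exacts [le_rfl, hw0 j]

lemma bridge (hw0 : ∀ j : ℤ, 0 ≤ w j) (hwsum : Summable w)
    (v : ℤ → ℝ) (hv : ∀ k : ℤ, Mx < |k| → v k = 0) (i : ℤ) :
    discLap w v i = (∑' j : ℤ, if j = 0 then (0:ℝ) else w j) * v i -
      ∑ k ∈ Finset.Icc (-Mx) Mx, (if k = i then (0:ℝ) else w (i - k)) * v k := by
  have hmem : ∀ k : ℤ, k ∉ Finset.Icc (-Mx) Mx → v k = 0 := by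
    intro k hk
    refine hv k ?_
    by_contra hcon
    push_neg at hcon
    exact hk (Finset.mem_Icc.mpr (abs_le.mp hcon))
  set s : Finset ℤ := (Finset.Icc (-Mx) Mx).image (fun k => i - k) with hs
  have hs1 : Summable (fun j : ℤ => (if j = 0 then (0:ℝ) else w j) * v i) :=
    (summable_w' hw0 hwsum).mul_right _
  have hs2 : Summable (fun j : ℤ => if j = 0 then (0:ℝ) else w j * v (i - j)) := by
    apply summable_of_ne_finset_zero (s := s)
    intro j hj
    rcases eq_or_ne j 0 with rfl | hj0
    · simp
    · rw [if_neg hj0, hmem (i - j), mul_zero]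
      intro hmem2
      exact hj (Finset.mem_image.mpr ⟨i - j, hmem2, by ring⟩)
  have h1 : discLap w v i = ∑' j : ℤ,
      ((if j = 0 then (0:ℝ) else w j) * v i - (if j = 0 then (0:ℝ) else w j * v (i - j))) := by
    rw [discLap]
    congr 1
    funext j
    split <;> ring
  rw [h1, Summable.tsum_sub hs1 hs2, tsum_mul_right, mul_comm]
  congr 1
  rw [tsum_eq_sum (s := s) (fun j hj => by
    rcases eq_or_ne j 0 with rfl | hj0
    · simp
    · rw [if_neg hj0, hmem (i - j), mul_zero]
      intro hmem2
      exact hj (Finset.mem_image.mpr ⟨i - j, hmem2, by ring⟩))]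
  rw [hs, Finset.sum_image (fun x _ y _ h => by omega)]
  refine Finset.sum_congr rfl fun k _ => ?_
  rw [show i - (i - k) = k by ring]
  rcases eq_or_ne k i with rfl | h
  · simp
  · rw [if_neg (sub_ne_zero.mpr (Ne.symm h)), if_neg h]

lemma zstep {q Δt : ℝ} (hq : 1 < q) (hΔt : 0 < Δt)
    (hw0 : ∀ j : ℤ, 0 ≤ w j) (hwsym : ∀ j : ℤ, w (-j) = w j) (hwsum : Summable w)
    (bfull : ℤ → ℝ) :
    ∃! v : ℤ → ℝ, (∀ k : ℤ, Mx < |k| → v k = 0) ∧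
      (∀ i : ℤ, |i| ≤ Mx → opow (v i) (q - 1) + Δt * discLap w v i = bfull i) := by
  classical
  set I : Finset ℤ := Finset.Icc (-Mx) Mx with hI
  set S : ℝ := ∑' j : ℤ, if j = 0 then (0:ℝ) else w j with hSdef
  have hS0 : 0 ≤ S := tsum_nonneg fun j => by split; exacts [le_rfl, hw0 j]
  set c : {k : ℤ // k ∈ I} → {k : ℤ // k ∈ I} → ℝ :=
    fun i k => if (k : ℤ) = (i : ℤ) then 0 else w ((i : ℤ) - (k : ℤ)) with hc
  have hc0 : ∀ i k, 0 ≤ c i k := fun i k => by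
    rw [hc]
    beta_reduce
    split
    exacts [le_rfl, hw0 _]
  have hcsym : ∀ i k, c i k = c k i := by
    intro i k
    rw [hc]; dsimp only
    rcases eq_or_ne (k : ℤ) (i : ℤ) with h | h
    · rw [if_pos h, if_pos h.symm]
    · rw [if_neg h, if_neg (Ne.symm h), ← hwsym ((k : ℤ) - (i : ℤ)),
        show -((k:ℤ) - (i:ℤ)) = (i:ℤ) - (k:ℤ) by ring]
  have hcd : ∀ i, c i i = 0 := fun i => by rw [hc]; simp
  have hcrow : ∀ i, ∑ k, c i k ≤ S := by
    intro i
    have := Finset.sum_coe_sort I (fun k => if k = (i:ℤ) then (0:ℝ) else w ((i:ℤ) - k))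
    rw [hc]
    dsimp only
    rw [this]
    exact row_bound hw0 hwsum (i : ℤ)
  obtain ⟨x, hx, hxu⟩ := core_solve hq hΔt hS0 c hc0 hcsym hcd hcrow
    (fun i => bfull (i : ℤ))
  set v : ℤ → ℝ := fun k => if h : k ∈ I then x ⟨k, h⟩ else 0 with hvdef
  have hvz : ∀ k : ℤ, Mx < |k| → v k = 0 := by
    intro k hk
    rw [hvdef]
    dsimp only
    rw [dif_neg]
    intro hmem
    rw [hI, Finset.mem_Icc] at hmem
    have := abs_le.mpr hmem
    linarith
  refine ⟨v, ⟨hvz, ?_⟩, ?_⟩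
  · intro i hi
    have hiI : i ∈ I := by rw [hI, Finset.mem_Icc]; exact abs_le.mp hi
    rw [bridge hw0 hwsum v hvz i]
    have hvi : v i = x ⟨i, hiI⟩ := by rw [hvdef]; dsimp only; rw [dif_pos hiI]
    have hsum : ∑ k ∈ Finset.Icc (-Mx) Mx, (if k = i then (0:ℝ) else w (i - k)) * v k
        = ∑ k : {k : ℤ // k ∈ I}, c ⟨i, hiI⟩ k * x k := by
      rw [← hI,
        ← Finset.sum_coe_sort I (fun k => (if k = i then (0:ℝ) else w (i - k)) * v k)]
      refine Finset.sum_congr rfl fun k _ => ?_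
      have hvk : v (k : ℤ) = x k := by
        rw [hvdef]; dsimp only; rw [dif_pos k.2]
      rw [hvk, hc]
    rw [hvi, hsum]
    exact hx ⟨i, hiI⟩
  · intro v' hv'
    set x' : {k : ℤ // k ∈ I} → ℝ := fun k => v' (k : ℤ) with hx'def
    have hx'eq : ∀ i, opow (x' i) (q - 1) + Δt * (S * x' i - ∑ k, c i k * x' k)
        = bfull (i : ℤ) := by
      intro i
      have hiabs : |(i:ℤ)| ≤ Mx := by
        have h2 : (i : ℤ) ∈ Finset.Icc (-Mx) Mx := i.2
        rw [Finset.mem_Icc] at h2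
        exact abs_le.mpr h2
      have heqn := hv'.2 (i : ℤ) hiabs
      rw [bridge hw0 hwsum v' hv'.1 (i : ℤ)] at heqn
      have hsum : ∑ k ∈ Finset.Icc (-Mx) Mx,
          (if k = (i:ℤ) then (0:ℝ) else w ((i:ℤ) - k)) * v' k
          = ∑ k : {k : ℤ // k ∈ I}, c i k * x' k := by
        rw [← hI, ← Finset.sum_coe_sort I
          (fun k => (if k = (i:ℤ) then (0:ℝ) else w ((i:ℤ) - k)) * v' k)]
      rw [hsum] at heqn
      exact heqn
    have hxx : x' = x := hxu x' hx'eq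
    funext k
    by_cases hk : k ∈ I
    · have h3 : v' k = x' ⟨k, hk⟩ := rfl
      rw [h3, hxx, hvdef]
      dsimp only
      rw [dif_pos hk]
    · have hk2 : Mx < |k| := by
        by_contra hcon
        push_neg at hcon
        exact hk (by rw [hI, Finset.mem_Icc]; exact abs_le.mp hcon)
      rw [hv'.1 k hk2, hvdef]
      dsimp only
      rw [dif_neg hk]

end Bridge


theorem stmt8 (q Δt h : ℝ) (hq : 1 < q) (hΔt : 0 < Δt) (hh : 0 < h)
    (Mx : ℤ) (hMx : 1 ≤ Mx)
    (w : ℤ → ℝ) (hw0 : ∀ j : ℤ, 0 ≤ w j) (hwsym : ∀ j : ℤ, w (-j) = w j) (hwsum : Summable w)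
    (u0 : ℤ → ℝ) (hu0 : ∀ i : ℤ, Mx < |i| → u0 i = 0) :
    ∃! u : ℕ → ℤ → ℝ, IsFD q Δt w Mx u0 u := by
  have step : ∀ vp : ℤ → ℝ, ∃! v : ℤ → ℝ, (∀ k : ℤ, Mx < |k| → v k = 0) ∧
      (∀ i : ℤ, |i| ≤ Mx →
        opow (v i) (q - 1) + Δt * discLap w v i = opow (vp i) (q - 1)) :=
    fun vp => zstep hq hΔt hw0 hwsym hwsum (fun i => opow (vp i) (q - 1))
  set u : ℕ → ℤ → ℝ := fun n => Nat.rec u0 (fun _ vp => (step vp).choose) n with hu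
  have hu0' : u 0 = u0 := rfl
  have husucc : ∀ n : ℕ, u (n + 1) = (step (u n)).choose := fun n => rfl
  have hspec : ∀ n : ℕ, (∀ k : ℤ, Mx < |k| → u (n + 1) k = 0) ∧
      (∀ i : ℤ, |i| ≤ Mx → opow (u (n + 1) i) (q - 1) + Δt * discLap w (u (n + 1)) i
        = opow (u n i) (q - 1)) := by
    intro n
    rw [husucc n]
    exact (step (u n)).choose_spec.1
  refine ⟨u, ⟨hu0', ?_, ?_⟩, ?_⟩
  · intro n i hi
    cases n with
    | zero => exact hu0 i hi
    | succ m => exact (hspec m).1 i hi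
  · intro n i hi
    have heqn := (hspec n).2 i hi
    have h2 : opow (u (n + 1) i) (q - 1) - opow (u n i) (q - 1)
        = -(Δt * discLap w (u (n + 1)) i) := by linarith
    rw [h2]
    field_simp
    ring
  · intro u' hu'
    obtain ⟨h0', hz', he'⟩ := hu'
    funext n
    induction n with
    | zero => exact h0'.trans hu0'.symm
    | succ m ih =>
      have hP : (∀ k : ℤ, Mx < |k| → u' (m + 1) k = 0) ∧
          (∀ i : ℤ, |i| ≤ Mx → opow (u' (m + 1) i) (q - 1)
            + Δt * discLap w (u' (m + 1)) i = opow (u m i) (q - 1)) := by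
        refine ⟨hz' (m + 1), fun i hi => ?_⟩
        have heqn := he' m i hi
        rw [ih] at heqn
        have h3 : (opow (u' (m + 1) i) (q - 1) - opow (u m i) (q - 1)) / Δt
            = -(discLap w (u' (m + 1)) i) := by linarith
        have h4 := (div_eq_iff hΔt.ne').mp h3
        linear_combination h4
      have := (step (u m)).choose_spec.2 (u' (m + 1)) hP
      rw [husucc m]
      exact this
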